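/- If a graph G contains a vertex v such that for every vertex w of G there is an induced subgraph of G isomorphic to P₄, C₄, or 2K₂ containing both v and w, then G is indecomposable with respect to Tyshkevich composition. -/

import Mathlib

def IsIndep {V : Type} (G : SimpleGraph V) (S : Set V) : Prop :=
  S.Pairwise fun a b => ¬ G.Adj a b

def IsKSPart {V : Type} (G : SimpleGraph V) (K S : Set V) : Prop :=
  (∀ v, v ∈ K ∨ v ∈ S) ∧ (∀ v, ¬(v ∈ K ∧ v ∈ S)) ∧ G.IsClique K ∧ IsIndep G S

def IsSplit {V : Type} (G : SimpleGraph V) : Prop :=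
  ∃ K S : Set V, IsKSPart G K S

def tcomp {V1 V0 : Type} (G1 : SimpleGraph V1) (K : Set V1) (G0 : SimpleGraph V0) :
    SimpleGraph (V1 ⊕ V0) where
  Adj x y :=
    match x, y with
    | Sum.inl a, Sum.inl b => G1.Adj a b
    | Sum.inl a, Sum.inr _ => a ∈ K
    | Sum.inr _, Sum.inl b => b ∈ K
    | Sum.inr a, Sum.inr b => G0.Adj a b
  symm := by
    constructor
    rintro (a | a) (b | b) h
    · exact G1.adj_symm h
    · exact h
    · exact h
    · exact G0.adj_symm h
  loopless := by
    constructor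
    rintro (a | a) h
    · exact G1.irrefl h
    · exact G0.irrefl h

def Decomposable {V : Type} (G : SimpleGraph V) : Prop :=
  ∃ (V1 V0 : Type) (_ : Nonempty V1) (_ : Nonempty V0)
    (G1 : SimpleGraph V1) (K S : Set V1) (G0 : SimpleGraph V0),
    IsKSPart G1 K S ∧ Nonempty (G ≃g tcomp G1 K G0)

def twoK2 : SimpleGraph (Fin 4) :=
  SimpleGraph.fromRel (fun a b => (a.val < 2 ∧ b.val < 2) ∨ (2 ≤ a.val ∧ 2 ≤ b.val))

def HasInducedCopyThrough {α V : Type} (F : SimpleGraph α) (G : SimpleGraph V)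
    (v w : V) : Prop :=
  ∃ f : F ↪g G, v ∈ Set.range ⇑f ∧ w ∈ Set.range ⇑f

-- auxiliary material
instance : DecidableRel (SimpleGraph.pathGraph 4).Adj := fun _ _ =>
  decidable_of_iff _ (SimpleGraph.pathGraph_adj).symm

instance : DecidableRel twoK2.Adj := fun a b =>
  decidable_of_iff _ (SimpleGraph.fromRel_adj _ a b).symm

/-- No "mixed" coloring of the vertices of `F` is compatible with `F` sitting as an
induced subgraph of a Tyshkevich composition: color `0` = clique part, `1` = independent
part, `2` = the `G0` side. -/
def NoGood (F : SimpleGraph (Fin 4)) : Prop :=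
  ∀ c : Fin 4 → Fin 3,
    (∀ i j, i ≠ j → c i = 0 → c j ≠ 1 → F.Adj i j) →
    (∀ i j, i ≠ j → c i = 1 → c j ≠ 0 → ¬ F.Adj i j) →
    (∀ i, c i ≠ 2) ∨ (∀ i, c i = 2)

lemma noGood_path : NoGood (SimpleGraph.pathGraph 4) := by unfold NoGood; decide
lemma noGood_cycle : NoGood (SimpleGraph.cycleGraph 4) := by unfold NoGood; decide
lemma noGood_twoK2 : NoGood twoK2 := by unfold NoGood; decide

lemma cross {V1 V0 : Type} {G1 : SimpleGraph V1} {K S : Set V1} (hKS : IsKSPart G1 K S)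
    {G0 : SimpleGraph V0} {F : SimpleGraph (Fin 4)} (hF : NoGood F)
    (f : F ↪g tcomp G1 K G0) {i j : Fin 4} {a : V1} {x : V0}
    (hi : f i = Sum.inl a) (hj : f j = Sum.inr x) : False := by
  classical
  obtain ⟨htot, hdisj, hclq, hind⟩ := hKS
  let c : Fin 4 → Fin 3 := fun k =>
    match f k with
    | Sum.inl b => if b ∈ K then 0 else 1
    | Sum.inr _ => 2
  have hc1 : ∀ i j, i ≠ j → c i = 0 → c j ≠ 1 → F.Adj i j := by
    intro i j hij h0 h1
    rcases hfi : f i with b | y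
    · rcases hfj : f j with b' | y'
      · -- both inl
        have hbK : b ∈ K := by
          simp only [c, hfi] at h0; by_contra hb; simp [hb] at h0
        have hb'K : b' ∈ K := by
          simp only [c, hfj] at h1; by_contra hb; simp [hb] at h1
        have hne : b ≠ b' := by
          intro he; exact hij (f.injective (by rw [hfi, hfj, he]))
        have : G1.Adj b b' := hclq hbK hb'K hne
        rw [← f.map_adj_iff, hfi, hfj]; exact this
      · have hbK : b ∈ K := by
          simp only [c, hfi] at h0; by_contra hb; simp [hb] at h0
        rw [← f.map_adj_iff, hfi, hfj]; exact hbK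
    · simp [c, hfi] at h0
  have hc2 : ∀ i j, i ≠ j → c i = 1 → c j ≠ 0 → ¬ F.Adj i j := by
    intro i j hij h1 h0 hadj
    rcases hfi : f i with b | y
    · have hbK : b ∉ K := by
        simp only [c, hfi] at h1; by_contra hb; simp [hb] at h1
      have hbS : b ∈ S := (htot b).resolve_left hbK
      rcases hfj : f j with b' | y'
      · have hb'K : b' ∉ K := by
          simp only [c, hfj] at h0; by_contra hb; simp [hb] at h0
        have hb'S : b' ∈ S := (htot b').resolve_left hb'K
        have hne : b ≠ b' := by
          intro he; exact hij (f.injective (by rw [hfi, hfj, he]))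
        have : G1.Adj b b' := by
          have := (f.map_adj_iff).mpr hadj; rw [hfi, hfj] at this; exact this
        exact hind hbS hb'S hne this
      · have : b ∈ K := by
          have := (f.map_adj_iff).mpr hadj; rw [hfi, hfj] at this; exact this
        exact hbK this
    · simp [c, hfi] at h1
  rcases hF c hc1 hc2 with h | h
  · exact h j (by simp [c, hj])
  · have := h i
    simp only [c, hi] at this
    split_ifs at this <;> exact absurd this (by decide)
  
/-- If some vertex `v` of `G` is such that every vertex `w` lies together with `v` in an
induced `P₄`, `C₄`, or `2K₂`, then `G` is indecomposable. -/
theorem stmt10 {V : Type} (G : SimpleGraph V)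
    (h : ∃ v, ∀ w,
      HasInducedCopyThrough (SimpleGraph.pathGraph 4) G v w ∨
      HasInducedCopyThrough (SimpleGraph.cycleGraph 4) G v w ∨
      HasInducedCopyThrough twoK2 G v w) :
    ¬ Decomposable G := by
  rintro ⟨V1, V0, ⟨w1⟩, ⟨w0⟩, G1, K, S, G0, hKS, ⟨e⟩⟩
  obtain ⟨v, hv⟩ := h
  -- helper: a copy through two vertices mapping to different sides is impossible
  have key : ∀ (F : SimpleGraph (Fin 4)), NoGood F → ∀ v' w' : V,
      HasInducedCopyThrough F G v' w' →
      ∀ (a : V1) (x : V0), e v' = Sum.inl a → e w' = Sum.inr x → False := by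
    intro F hF v' w' ⟨f, ⟨i, hi⟩, ⟨j, hj⟩⟩ a x hv' hw'
    let g : F ↪g tcomp G1 K G0 := e.toEmbedding.comp f
    have hgi : g i = Sum.inl a := by
      show e (f i) = Sum.inl a
      rw [hi, hv']
    have hgj : g j = Sum.inr x := by
      show e (f j) = Sum.inr x
      rw [hj, hw']
    exact cross hKS hF g hgi hgj
  rcases he : e v with a | y
  · -- v on the G1 side; take w mapping to the G0 side
    set w := e.symm (Sum.inr w0) with hw
    have hew : e w = Sum.inr w0 := by simp [hw]
    rcases hv w with hc | hc | hc
    · exact key _ noGood_path v w hc a w0 he hew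
    · exact key _ noGood_cycle v w hc a w0 he hew
    · exact key _ noGood_twoK2 v w hc a w0 he hew
  · -- v on the G0 side; take w mapping to the G1 side
    set w := e.symm (Sum.inl w1) with hw
    have hew : e w = Sum.inl w1 := by simp [hw]
    have swap : ∀ (F : SimpleGraph (Fin 4)), HasInducedCopyThrough F G v w →
        HasInducedCopyThrough F G w v := by
      rintro F ⟨f, h1, h2⟩; exact ⟨f, h2, h1⟩
    rcases hv w with hc | hc | hc
    · exact key _ noGood_path w v (swap _ hc) w1 y hew he
    · exact key _ noGood_cycle w v (swap _ hc) w1 y hew he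
    · exact key _ noGood_twoK2 w v (swap _ hc) w1 y hew he
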